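/- The infinite product over odd integers k ≥ 3 of (1 − 2/k)·e^{2/k} converges and equals 2·e^{γ−2}; equivalently, lim_{J→∞} Π_{j=1}^{J} (1 − 2/(2j+1))·e^{2/(2j+1)} = 2·e^{γ−2}. -/

import Mathlib

open Filter Finset Real

lemma aux_sum (J : ℕ) : ∑ j ∈ Finset.Icc 1 J, 2 / (2 * (j : ℝ) + 1)
    = 2 * (harmonic (2*J+1) : ℝ) - (harmonic J : ℝ) - 2 := by
  induction J with
  | zero => simp [harmonic_succ]
  | succ n ih =>
    rw [Finset.sum_Icc_succ_top (by omega), ih]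
    have h1 : 2*(n+1)+1 = (2*n+1) + 1 + 1 := by ring
    rw [h1, harmonic_succ (2*n+1+1), harmonic_succ (2*n+1), harmonic_succ n]
    push_cast
    have h2 : (2:ℝ)*n+1+1 ≠ 0 := by positivity
    have h3 : (2:ℝ)*n+1+1+1 ≠ 0 := by positivity
    have h4 : (n:ℝ)+1 ≠ 0 := by positivity
    have h5 : (2:ℝ)*(n+1)+1 ≠ 0 := by positivity
    field_simp
    ring

lemma aux_prod (J : ℕ) : ∏ j ∈ Finset.Icc 1 J, (1 - 2 / (2 * (j : ℝ) + 1))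
    = 1 / (2 * (J : ℝ) + 1) := by
  induction J with
  | zero => simp
  | succ n ih =>
    rw [Finset.prod_Icc_succ_top (by omega), ih]
    have h2 : (2:ℝ)*n+1 ≠ 0 := by positivity
    have h5 : (2:ℝ)*(n+1)+1 ≠ 0 := by push_cast; positivity
    push_cast
    field_simp
    ring

lemma aux_closed (J : ℕ) :
    ∏ j ∈ Finset.Icc 1 J, (1 - 2 / (2 * (j : ℝ) + 1)) * Real.exp (2 / (2 * (j : ℝ) + 1))
    = Real.exp (2 * eulerMascheroniSeq (2*J+1) - eulerMascheroniSeq J - 2)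
        * (2 + 2 / (2 * (J : ℝ) + 1)) := by
  rw [Finset.prod_mul_distrib, aux_prod, ← Real.exp_sum, aux_sum]
  set A := 2 * eulerMascheroniSeq (2*J+1) - eulerMascheroniSeq J - 2 with hA
  have h : 2 * (harmonic (2*J+1) : ℝ) - (harmonic J : ℝ) - 2
      = A + (Real.log (2*(J:ℝ)+1+1) + Real.log (2*(J:ℝ)+1+1)) - Real.log ((J:ℝ)+1) := by
    rw [hA]
    simp only [Real.eulerMascheroniSeq]
    push_cast
    ring
  rw [h, Real.exp_sub, Real.exp_add, Real.exp_add, Real.exp_log (by positivity),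
    Real.exp_log (show (0:ℝ) < (J:ℝ)+1 by positivity)]
  have h2 : (2:ℝ)*J+1 ≠ 0 := by positivity
  have h4 : (J:ℝ)+1 ≠ 0 := by positivity
  field_simp
  ring

theorem infinite_product_over_odd_integers :
    Tendsto (fun J : ℕ => ∏ j ∈ Finset.Icc 1 J,
        (1 - 2 / (2 * (j : ℝ) + 1)) * Real.exp (2 / (2 * (j : ℝ) + 1)))
      atTop (nhds (2 * Real.exp (Real.eulerMascheroniConstant - 2))) := by
  have hodd : Tendsto (fun J : ℕ => 2*J+1) atTop atTop :=
    tendsto_atTop_atTop_of_monotone (fun a b h => by omega) (fun b => ⟨b, by omega⟩)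
  have h1 : Tendsto (fun J : ℕ => eulerMascheroniSeq (2*J+1)) atTop
      (nhds eulerMascheroniConstant) := tendsto_eulerMascheroniSeq.comp hodd
  have hA : Tendsto (fun J : ℕ => 2 * eulerMascheroniSeq (2*J+1) - eulerMascheroniSeq J - 2)
      atTop (nhds (2 * eulerMascheroniConstant - eulerMascheroniConstant - 2)) :=
    ((h1.const_mul 2).sub tendsto_eulerMascheroniSeq).sub_const 2
  have hexp := (Real.continuous_exp.continuousAt).tendsto.comp hA
  have hden : Tendsto (fun J : ℕ => 2*(J:ℝ)+1) atTop atTop := by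
    apply tendsto_atTop_add_const_right
    exact (tendsto_natCast_atTop_atTop).const_mul_atTop two_pos
  have hrat : Tendsto (fun J : ℕ => 2 + 2 / (2*(J:ℝ)+1)) atTop (nhds (2 + 0)) :=
    tendsto_const_nhds.add (tendsto_const_nhds.div_atTop hden)
  have := hexp.mul hrat
  have hval : Real.exp (2 * eulerMascheroniConstant - eulerMascheroniConstant - 2) * (2 + 0)
      = 2 * Real.exp (eulerMascheroniConstant - 2) := by
    have h : 2 * eulerMascheroniConstant - eulerMascheroniConstant - 2
        = eulerMascheroniConstant - 2 := by ring
    rw [h]; ring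
  rw [hval] at this
  exact this.congr (fun J => (aux_closed J).symm)
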